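/- Let π : C̃ → C be an étale double cover given by 2-torsion η, and M a theta-characteristic on C such that both M and M ⊗ η are odd (h^0 odd). Then π^*M is an effective even theta-characteristic on C̃, i.e., a vanishing thetanull: (π^*M)^{⊗2} ≅ ω_{C̃}, h^0(C̃, π^*M) ≥ 2, and h^0(C̃, π^*M) is even. -/
import Mathlib

/-- Let `π : C̃ → C` be the étale double cover of a genus `g ≥ 2` curve given by
a nontrivial 2-torsion line bundle `η`, and let `M` be a theta-characteristic on `C`
(`M^{⊗2} ≅ ω_C`) such that both `M` and `M ⊗ η` are odd (`h^0` odd). Then `π^*M` is an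
effective even theta-characteristic (vanishing thetanull) on `C̃`:
`(π^*M)^{⊗2} ≅ ω_{C̃}`, `h^0(C̃, π^*M) ≥ 2`, and `h^0(C̃, π^*M)` is even. Picard groups are
written additively; `ω_{C̃} ≅ π^*ω_C` and `h^0(C̃,π^*·) = h^0(C,·) + h^0(C,·⊗η)` are
supplied as hypotheses. -/
theorem stmt14 (PicC PicCt : Type*) [AddCommGroup PicC] [AddCommGroup PicCt]
    (g : ℕ) (hg : 2 ≤ g)
    (pullπ : PicC →+ PicCt) (η ωC : PicC) (ωCt : PicCt)
    (hη2 : 2 • η = 0) (hηne : η ≠ 0)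
    (h0C : PicC → ℕ) (h0Ct : PicCt → ℕ)
    (hω : ωCt = pullπ ωC)
    (hpushpull : ∀ M : PicC, h0Ct (pullπ M) = h0C M + h0C (M + η))
    (M : PicC) (hM : 2 • M = ωC) (hModd : Odd (h0C M)) (hMηodd : Odd (h0C (M + η))) :
    2 • (pullπ M) = ωCt ∧ 2 ≤ h0Ct (pullπ M) ∧ Even (h0Ct (pullπ M)) := by
  refine ⟨?_, ?_, ?_⟩
  · rw [hω, ← hM, map_nsmul]
  · rw [hpushpull]
    have h1 := hModd.pos
    have h2 := hMηodd.pos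
    omega
  · rw [hpushpull]
    exact hModd.add_odd hMηodd
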